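/- Let (λ, g) with g = Ψ𝐠 ∈ V_N, and define the variance-residual [res^var(λ,g)]² = (𝐠*[L − λA* − conj(λ)A + |λ|²G]𝐠)/(𝐠*G𝐠), where G_{ij} = ⟨ψ_j,ψ_i⟩, A_{ij} = ⟨K[ψ_j],ψ_i⟩, and L_{ij} = ∫_Ω E_τ[ψ_j(F(x,τ)) conj(ψ_i(F(x,τ)))] dω(x). Then 𝐠*[L − λA* − conj(λ)A + |λ|²G]𝐠 = E_τ[‖g∘F_τ − λg‖²] = ‖K[g] − λg‖² + ∫_Ω Var_τ[g(F(x,τ))] dω(x). In particular [res^var(λ,g)]² ≥ ‖K[g]−λg‖²/‖g‖², with equality iff the integrated variance of g∘F_τ vanishes. -/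

import Mathlib

open MeasureTheory Matrix ComplexConjugate

private lemma memLp_conj {α : Type*} [MeasurableSpace α] {μ : Measure α} {p : ENNReal}
    {f : α → ℂ} (hf : MemLp f p μ) : MemLp (fun x => conj (f x)) p μ :=
  hf.of_le (Complex.continuous_conj.comp_aestronglyMeasurable hf.1)
    (Filter.Eventually.of_forall fun x => by simp)

private lemma integrable_mul2 {α : Type*} [MeasurableSpace α] {μ : Measure α}
    {f g : α → ℂ} (hf : MemLp f 2 μ) (hg : MemLp g 2 μ) :
    Integrable (fun x => f x * g x) μ := by
  have h : (1 : ENNReal) / 1 = 1 / 2 + 1 / 2 := by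
    rw [ENNReal.div_add_div_same, one_div_one, one_add_one_eq_two,
      ENNReal.div_self two_ne_zero ENNReal.ofNat_ne_top]
  haveI : ENNReal.HolderTriple 2 2 1 := ⟨by rw [ENNReal.inv_two_add_inv_two, inv_one]⟩
  have := hg.smul (r := 1) hf
  rw [memLp_one_iff_integrable] at this
  exact this

/-- bias–variance expansion for a single L² function against a probability measure -/
private lemma l2_expand {α : Type*} [MeasurableSpace α] {ρ : Measure α} [IsProbabilityMeasure ρ]
    {f : α → ℂ} (hf : MemLp f 2 ρ) (b : ℂ) :
    ∫ τ, ‖f τ - b‖ ^ 2 ∂ρ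
      = ((∫ τ, ‖f τ‖ ^ 2 ∂ρ) - ‖∫ τ, f τ ∂ρ‖ ^ 2) + ‖(∫ τ, f τ ∂ρ) - b‖ ^ 2 := by
  have h1 : Integrable (fun τ => ‖f τ‖ ^ 2) ρ :=
    (memLp_two_iff_integrable_sq_norm hf.1).mp hf
  have hfi : Integrable f ρ := hf.integrable one_le_two
  have hci : Integrable (fun τ => conj (f τ) * b) ρ :=
    ((memLp_conj hf).integrable one_le_two).mul_const b
  have h2 : Integrable (fun τ => 2 * Complex.re (conj (f τ) * b)) ρ :=
    (hci.re).const_mul 2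
  have key : ∀ (z : ℂ), ‖z - b‖ ^ 2 = ‖z‖ ^ 2 - 2 * Complex.re (conj z * b) + ‖b‖ ^ 2 := by
    intro z
    have := @norm_sub_sq ℂ ℂ _ _ _ z b
    simp [RCLike.inner_apply] at this ⊢
    linarith
  rw [show (fun τ => ‖f τ - b‖ ^ 2) = fun τ =>
      ‖f τ‖ ^ 2 - 2 * Complex.re (conj (f τ) * b) + ‖b‖ ^ 2 from funext fun τ => key (f τ)]
  have h12 : Integrable (fun τ => ‖f τ‖ ^ 2 - 2 * Complex.re (conj (f τ) * b)) ρ := h1.sub h2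
  rw [integral_add h12 (integrable_const _), integral_sub h1 h2,
    integral_const_mul]
  rw [show (fun a => ((starRingEnd ℂ) (f a) * b).re) = fun a => RCLike.re ((starRingEnd ℂ) (f a) * b)
      from rfl, integral_re hci, integral_mul_const, integral_conj, integral_const, probReal_univ]
  rw [key (∫ τ, f τ ∂ρ)]
  simp
  ring

private lemma sq_norm_integral_le {α : Type*} [MeasurableSpace α] {ρ : Measure α}
    [IsProbabilityMeasure ρ] {f : α → ℂ} (hf : MemLp f 2 ρ) :
    ‖∫ τ, f τ ∂ρ‖ ^ 2 ≤ ∫ τ, ‖f τ‖ ^ 2 ∂ρ := by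
  have h := l2_expand hf (∫ τ, f τ ∂ρ)
  have h0 : (0 : ℝ) ≤ ∫ τ, ‖f τ - ∫ τ, f τ ∂ρ‖ ^ 2 ∂ρ :=
    integral_nonneg fun τ => sq_nonneg _
  simp only [sub_self, norm_zero] at h
  nlinarith

private lemma memLp_kernel_integral {Ω Ωs : Type*} [MeasurableSpace Ω] [MeasurableSpace Ωs]
    {ω : Measure Ω} {ρ : Measure Ωs} [IsProbabilityMeasure ρ] [SigmaFinite ω]
    {f : Ω × Ωs → ℂ} (hf : MemLp f 2 (ω.prod ρ)) :
    MemLp (fun x => ∫ τ, f (x, τ) ∂ρ) 2 ω := by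
  have hsq : Integrable (fun p => ‖f p‖ ^ 2) (ω.prod ρ) :=
    (memLp_two_iff_integrable_sq_norm hf.1).mp hf
  have haesm : AEStronglyMeasurable (fun x => ∫ τ, f (x, τ) ∂ρ) ω :=
    hf.1.integral_prod_right'
  have hslice : ∀ᵐ x ∂ω, MemLp (fun τ => f (x, τ)) 2 ρ := by
    filter_upwards [hsq.prod_right_ae, hf.1.prodMk_left] with x h1 h2
    exact (memLp_two_iff_integrable_sq_norm h2).mpr h1
  rw [memLp_two_iff_integrable_sq_norm haesm]
  refine Integrable.mono' hsq.integral_prod_left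
    ((continuous_pow 2).comp_aestronglyMeasurable haesm.norm) ?_
  filter_upwards [hslice] with x hx
  rw [Real.norm_of_nonneg (sq_nonneg _)]
  exact sq_norm_integral_le hx

private lemma ae_slice_memLp {Ω Ωs : Type*} [MeasurableSpace Ω] [MeasurableSpace Ωs]
    {ω : Measure Ω} {ρ : Measure Ωs} [IsProbabilityMeasure ρ] [SigmaFinite ω]
    {f : Ω × Ωs → ℂ} (hf : MemLp f 2 (ω.prod ρ)) :
    ∀ᵐ x ∂ω, MemLp (fun τ => f (x, τ)) 2 ρ := by
  have hsq : Integrable (fun p => ‖f p‖ ^ 2) (ω.prod ρ) :=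
    (memLp_two_iff_integrable_sq_norm hf.1).mp hf
  filter_upwards [hsq.prod_right_ae, hf.1.prodMk_left] with x h1 h2
  exact (memLp_two_iff_integrable_sq_norm h2).mpr h1

private lemma quad_sum {α : Type*} [MeasurableSpace α] (μ : Measure α) {N : ℕ}
    (c : Fin N → ℂ) (φ χ : Fin N → α → ℂ)
    (hint : ∀ i j, Integrable (fun x => φ j x * conj (χ i x)) μ) :
    ∑ i, ∑ j, conj (c i) * (∫ x, φ j x * conj (χ i x) ∂μ) * c j
      = ∫ x, (∑ j, c j * φ j x) * conj (∑ i, c i * χ i x) ∂μ := by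
  have h1 : ∀ i j : Fin N,
      Integrable (fun x => conj (c i) * (φ j x * conj (χ i x)) * c j) μ :=
    fun i j => ((hint i j).const_mul _).mul_const _
  calc ∑ i, ∑ j, conj (c i) * (∫ x, φ j x * conj (χ i x) ∂μ) * c j
      = ∑ i, ∑ j, ∫ x, conj (c i) * (φ j x * conj (χ i x)) * c j ∂μ := by
        refine Finset.sum_congr rfl fun i _ => Finset.sum_congr rfl fun j _ => ?_
        rw [integral_mul_const, integral_const_mul]
    _ = ∫ x, ∑ i, ∑ j, conj (c i) * (φ j x * conj (χ i x)) * c j ∂μ := by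
        rw [integral_finset_sum _ fun i _ => integrable_finset_sum _ fun j _ => h1 i j]
        exact Finset.sum_congr rfl fun i _ =>
          (integral_finset_sum _ fun j _ => h1 i j).symm
    _ = ∫ x, (∑ j, c j * φ j x) * conj (∑ i, c i * χ i x) ∂μ := by
        refine integral_congr_ae (Filter.Eventually.of_forall fun x => ?_)
        simp only
        rw [map_sum, Finset.sum_mul_sum, Finset.sum_comm]
        refine Finset.sum_congr rfl fun i _ => Finset.sum_congr rfl fun j _ => ?_
        simp only [_root_.map_mul]
        ring

set_option maxHeartbeats 1000000 in
theorem variance_residual_identity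
    {Ω Ωs : Type*} [MeasurableSpace Ω] [MeasurableSpace Ωs]
    (ω : Measure Ω) (ρ : Measure Ωs) [IsProbabilityMeasure ρ] [SigmaFinite ω]
    (F : Ω → Ωs → Ω) (hF : Measurable (Function.uncurry F))
    {N : ℕ} (ψ : Fin N → Ω → ℂ) (hlin : LinearIndependent ℂ ψ)
    (hψ : ∀ j, MemLp (ψ j) 2 ω)
    (hψF : ∀ j, MemLp (fun p : Ω × Ωs => ψ j (F p.1 p.2)) 2 (ω.prod ρ))
    (G A L : Matrix (Fin N) (Fin N) ℂ)
    (hG : ∀ i j, G i j = ∫ x, ψ j x * (starRingEnd ℂ) (ψ i x) ∂ω)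
    (hA : ∀ i j, A i j = ∫ x, (∫ τ, ψ j (F x τ) ∂ρ) * (starRingEnd ℂ) (ψ i x) ∂ω)
    (hL : ∀ i j, L i j = ∫ p, ψ j (F p.1 p.2) * (starRingEnd ℂ) (ψ i (F p.1 p.2)) ∂(ω.prod ρ))
    (c : Fin N → ℂ) (l : ℂ) :
    let g : Ω → ℂ := fun x => ∑ j, c j * ψ j x
    let Kg : Ω → ℂ := fun x => ∫ τ, g (F x τ) ∂ρ
    (star c ⬝ᵥ (L - l • Aᴴ - (starRingEnd ℂ l) • A + ((‖l‖ ^ 2 : ℝ) : ℂ) • G).mulVec c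
        = ((∫ p, ‖g (F p.1 p.2) - l * g p.1‖ ^ 2 ∂(ω.prod ρ) : ℝ) : ℂ))
    ∧ ((∫ p, ‖g (F p.1 p.2) - l * g p.1‖ ^ 2 ∂(ω.prod ρ))
        = (∫ x, ‖Kg x - l * g x‖ ^ 2 ∂ω)
          + ∫ x, ((∫ τ, ‖g (F x τ)‖ ^ 2 ∂ρ) - ‖Kg x‖ ^ 2) ∂ω)
    ∧ ((∫ x, ‖Kg x - l * g x‖ ^ 2 ∂ω) / (∫ x, ‖g x‖ ^ 2 ∂ω)
        ≤ (∫ p, ‖g (F p.1 p.2) - l * g p.1‖ ^ 2 ∂(ω.prod ρ)) / (∫ x, ‖g x‖ ^ 2 ∂ω))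
    ∧ ((∫ p, ‖g (F p.1 p.2) - l * g p.1‖ ^ 2 ∂(ω.prod ρ))
          = (∫ x, ‖Kg x - l * g x‖ ^ 2 ∂ω)
        ↔ (∫ x, ((∫ τ, ‖g (F x τ)‖ ^ 2 ∂ρ) - ‖Kg x‖ ^ 2) ∂ω) = 0) := by
  intro g Kg
  -- basic membership facts
  have hg2 : MemLp g 2 ω := memLp_finset_sum _ fun j _ => (hψ j).const_mul (c j)
  have hgF2 : MemLp (fun p : Ω × Ωs => g (F p.1 p.2)) 2 (ω.prod ρ) :=
    memLp_finset_sum _ fun j _ => (hψF j).const_mul (c j)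
  have hfstMP : MeasurePreserving (Prod.fst) (ω.prod ρ) ω := ⟨measurable_fst, by simp⟩
  have hgfst2 : MemLp (fun p : Ω × Ωs => g p.1) 2 (ω.prod ρ) :=
    hg2.comp_measurePreserving hfstMP
  have hdiff2 : MemLp (fun p : Ω × Ωs => g (F p.1 p.2) - l * g p.1) 2 (ω.prod ρ) :=
    hgF2.sub (hgfst2.const_mul l)
  have hdsq : Integrable (fun p : Ω × Ωs => ‖g (F p.1 p.2) - l * g p.1‖ ^ 2) (ω.prod ρ) :=
    (memLp_two_iff_integrable_sq_norm hdiff2.1).mp hdiff2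
  have hgFsq : Integrable (fun p : Ω × Ωs => ‖g (F p.1 p.2)‖ ^ 2) (ω.prod ρ) :=
    (memLp_two_iff_integrable_sq_norm hgF2.1).mp hgF2
  have hKg2 : MemLp Kg 2 ω := memLp_kernel_integral hgF2
  have hKψ2 : ∀ j, MemLp (fun x => ∫ τ, ψ j (F x τ) ∂ρ) 2 ω :=
    fun j => memLp_kernel_integral (hψF j)
  have hslice : ∀ᵐ x ∂ω, MemLp (fun τ => g (F x τ)) 2 ρ := ae_slice_memLp hgF2
  have hv_int : Integrable (fun x => ∫ τ, ‖g (F x τ)‖ ^ 2 ∂ρ) ω := hgFsq.integral_prod_left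
  have hKgsq : Integrable (fun x => ‖Kg x‖ ^ 2) ω :=
    (memLp_two_iff_integrable_sq_norm hKg2.1).mp hKg2
  have hC_int : Integrable (fun x => (∫ τ, ‖g (F x τ)‖ ^ 2 ∂ρ) - ‖Kg x‖ ^ 2) ω :=
    hv_int.sub hKgsq
  have hB2 : MemLp (fun x => Kg x - l * g x) 2 ω := hKg2.sub (hg2.const_mul l)
  have hB_int : Integrable (fun x => ‖Kg x - l * g x‖ ^ 2) ω :=
    (memLp_two_iff_integrable_sq_norm hB2.1).mp hB2
  -- part 2 : the mean–variance decomposition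
  have part2 : (∫ p, ‖g (F p.1 p.2) - l * g p.1‖ ^ 2 ∂(ω.prod ρ))
      = (∫ x, ‖Kg x - l * g x‖ ^ 2 ∂ω)
        + ∫ x, ((∫ τ, ‖g (F x τ)‖ ^ 2 ∂ρ) - ‖Kg x‖ ^ 2) ∂ω := by
    rw [integral_prod _ hdsq, ← integral_add hB_int hC_int]
    refine integral_congr_ae ?_
    filter_upwards [hslice] with x hx
    show (∫ τ, ‖g (F x τ) - l * g x‖ ^ 2 ∂ρ) = _
    rw [l2_expand hx (l * g x)]
    exact add_comm _ _
  -- nonnegativity of the integrated variance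
  have hC_nonneg : 0 ≤ ∫ x, ((∫ τ, ‖g (F x τ)‖ ^ 2 ∂ρ) - ‖Kg x‖ ^ 2) ∂ω := by
    refine integral_nonneg_of_ae ?_
    filter_upwards [hslice] with x hx
    exact sub_nonneg.mpr (sq_norm_integral_le hx)
  have part3 : (∫ x, ‖Kg x - l * g x‖ ^ 2 ∂ω) / (∫ x, ‖g x‖ ^ 2 ∂ω)
      ≤ (∫ p, ‖g (F p.1 p.2) - l * g p.1‖ ^ 2 ∂(ω.prod ρ)) / (∫ x, ‖g x‖ ^ 2 ∂ω) := by
    have hle : (∫ x, ‖Kg x - l * g x‖ ^ 2 ∂ω)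
        ≤ ∫ p, ‖g (F p.1 p.2) - l * g p.1‖ ^ 2 ∂(ω.prod ρ) := by
      rw [part2]; linarith
    rcases (integral_nonneg (f := fun x => ‖g x‖ ^ 2) fun x => sq_nonneg ‖g x‖).eq_or_lt with h | h
    · rw [← h]; simp
    · gcongr
  have part4 : (∫ p, ‖g (F p.1 p.2) - l * g p.1‖ ^ 2 ∂(ω.prod ρ))
        = (∫ x, ‖Kg x - l * g x‖ ^ 2 ∂ω)
      ↔ (∫ x, ((∫ τ, ‖g (F x τ)‖ ^ 2 ∂ρ) - ‖Kg x‖ ^ 2) ∂ω) = 0 := by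
    rw [part2]
    constructor <;> intro h <;> linarith
  refine ⟨?_, part2, part3, part4⟩
  -- Part 1 : the quadratic-form identity
  have hintL : ∀ i j : Fin N, Integrable
      (fun p : Ω × Ωs => ψ j (F p.1 p.2) * conj (ψ i (F p.1 p.2))) (ω.prod ρ) :=
    fun i j => integrable_mul2 (hψF j) (memLp_conj (hψF i))
  have hintA : ∀ i j : Fin N, Integrable
      (fun x => (∫ τ, ψ j (F x τ) ∂ρ) * conj (ψ i x)) ω :=
    fun i j => integrable_mul2 (hKψ2 j) (memLp_conj (hψ i))
  have hintG : ∀ i j : Fin N, Integrable (fun x => ψ j x * conj (ψ i x)) ω :=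
    fun i j => integrable_mul2 (hψ j) (memLp_conj (hψ i))
  have hSL : ∑ i, ∑ j, conj (c i) * L i j * c j
      = ∫ p, g (F p.1 p.2) * conj (g (F p.1 p.2)) ∂(ω.prod ρ) := by
    simp_rw [hL]
    exact quad_sum (ω.prod ρ) c (fun j p => ψ j (F p.1 p.2)) (fun i p => ψ i (F p.1 p.2)) hintL
  have hSG : ∑ i, ∑ j, conj (c i) * G i j * c j = ∫ x, g x * conj (g x) ∂ω := by
    simp_rw [hG]
    exact quad_sum ω c (fun j x => ψ j x) (fun i x => ψ i x) hintG
  have hψslice : ∀ᵐ x ∂ω, ∀ j, Integrable (fun τ => ψ j (F x τ)) ρ := by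
    rw [MeasureTheory.ae_all_iff]
    intro j
    filter_upwards [ae_slice_memLp (hψF j)] with x hx using hx.integrable one_le_two
  have hKg_eq : ∀ᵐ x ∂ω, Kg x = ∑ j, c j * ∫ τ, ψ j (F x τ) ∂ρ := by
    filter_upwards [hψslice] with x hx
    show (∫ τ, ∑ j, c j * ψ j (F x τ) ∂ρ) = _
    rw [integral_finset_sum _ fun j _ => (hx j).const_mul (c j)]
    exact Finset.sum_congr rfl fun j _ => integral_const_mul _ _
  have hSA : ∑ i, ∑ j, conj (c i) * A i j * c j = ∫ x, Kg x * conj (g x) ∂ω := by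
    simp_rw [hA]
    rw [quad_sum ω c (fun j x => ∫ τ, ψ j (F x τ) ∂ρ) (fun i x => ψ i x) hintA]
    refine integral_congr_ae ?_
    filter_upwards [hKg_eq] with x hx
    rw [hx]
  have hSAH : ∑ i, ∑ j, conj (c i) * Aᴴ i j * c j
      = conj (∫ x, Kg x * conj (g x) ∂ω) := by
    rw [← hSA, map_sum]
    rw [Finset.sum_comm]
    refine Finset.sum_congr rfl fun i _ => ?_
    rw [map_sum]
    refine Finset.sum_congr rfl fun j _ => ?_
    simp only [conjTranspose_apply, _root_.map_mul, RCLike.star_def, starRingEnd_self_apply]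
    ring
  have hl : l * conj l = ((‖l‖ ^ 2 : ℝ) : ℂ) := by
    rw [Complex.mul_conj]
    simp [Complex.normSq_eq_norm_sq]
  -- expand the right-hand side
  have hI0 : Integrable (fun p : Ω × Ωs => g (F p.1 p.2) * conj (g (F p.1 p.2))) (ω.prod ρ) :=
    integrable_mul2 hgF2 (memLp_conj hgF2)
  have hI1 : Integrable (fun p : Ω × Ωs => g (F p.1 p.2) * conj (g p.1)) (ω.prod ρ) :=
    integrable_mul2 hgF2 (memLp_conj hgfst2)
  have hI2 : Integrable (fun p : Ω × Ωs => g p.1 * conj (g (F p.1 p.2))) (ω.prod ρ) :=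
    integrable_mul2 hgfst2 (memLp_conj hgF2)
  have hI3 : Integrable (fun p : Ω × Ωs => g p.1 * conj (g p.1)) (ω.prod ρ) :=
    integrable_mul2 hgfst2 (memLp_conj hgfst2)
  have hE1 : (∫ p, g (F p.1 p.2) * conj (g p.1) ∂(ω.prod ρ)) = ∫ x, Kg x * conj (g x) ∂ω := by
    rw [integral_prod _ hI1]
    refine integral_congr_ae (Filter.Eventually.of_forall fun x => ?_)
    show (∫ τ, g (F x τ) * conj (g x) ∂ρ) = _
    rw [integral_mul_const]
  have hE2 : (∫ p, g p.1 * conj (g (F p.1 p.2)) ∂(ω.prod ρ))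
      = conj (∫ x, Kg x * conj (g x) ∂ω) := by
    rw [← integral_conj, integral_prod _ hI2]
    refine integral_congr_ae (Filter.Eventually.of_forall fun x => ?_)
    show (∫ τ, g x * conj (g (F x τ)) ∂ρ) = conj (Kg x * conj (g x))
    rw [integral_const_mul, integral_conj, _root_.map_mul, starRingEnd_self_apply]
    show g x * conj (Kg x) = conj (Kg x) * g x
    ring
  have hE3 : (∫ p, g p.1 * conj (g p.1) ∂(ω.prod ρ)) = ∫ x, g x * conj (g x) ∂ω := by
    rw [integral_prod _ hI3]
    refine integral_congr_ae (Filter.Eventually.of_forall fun x => ?_)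
    show (∫ τ, g x * conj (g x) ∂ρ) = _
    simp
  have hterm2 : ∀ p : Ω × Ωs, ((‖g (F p.1 p.2) - l * g p.1‖ ^ 2 : ℝ) : ℂ)
      = g (F p.1 p.2) * conj (g (F p.1 p.2))
        - conj l * (g (F p.1 p.2) * conj (g p.1))
        - l * (g p.1 * conj (g (F p.1 p.2)))
        + ((‖l‖ ^ 2 : ℝ) : ℂ) * (g p.1 * conj (g p.1)) := by
    intro p
    rw [← hl]
    have : ((‖g (F p.1 p.2) - l * g p.1‖ ^ 2 : ℝ) : ℂ)
        = (g (F p.1 p.2) - l * g p.1) * conj (g (F p.1 p.2) - l * g p.1) := by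
      rw [Complex.mul_conj]
      simp [Complex.normSq_eq_norm_sq]
    rw [this]
    simp only [map_sub, _root_.map_mul]
    ring
  have hRHS : ((∫ p, ‖g (F p.1 p.2) - l * g p.1‖ ^ 2 ∂(ω.prod ρ) : ℝ) : ℂ)
      = (∫ p, g (F p.1 p.2) * conj (g (F p.1 p.2)) ∂(ω.prod ρ))
        - l * conj (∫ x, Kg x * conj (g x) ∂ω)
        - conj l * (∫ x, Kg x * conj (g x) ∂ω)
        + ((‖l‖ ^ 2 : ℝ) : ℂ) * (∫ x, g x * conj (g x) ∂ω) := by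
    have hco : ((∫ p, ‖g (F p.1 p.2) - l * g p.1‖ ^ 2 ∂(ω.prod ρ) : ℝ) : ℂ)
        = ∫ p, ((‖g (F p.1 p.2) - l * g p.1‖ ^ 2 : ℝ) : ℂ) ∂(ω.prod ρ) :=
      (integral_ofReal (𝕜 := ℂ)).symm
    rw [hco]
    calc (∫ p, ((‖g (F p.1 p.2) - l * g p.1‖ ^ 2 : ℝ) : ℂ) ∂(ω.prod ρ))
        = ∫ p, (g (F p.1 p.2) * conj (g (F p.1 p.2))
            - conj l * (g (F p.1 p.2) * conj (g p.1))
            - l * (g p.1 * conj (g (F p.1 p.2)))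
            + ((‖l‖ ^ 2 : ℝ) : ℂ) * (g p.1 * conj (g p.1))) ∂(ω.prod ρ) := by
          exact integral_congr_ae (Filter.Eventually.of_forall fun p => hterm2 p)
      _ = (∫ p, g (F p.1 p.2) * conj (g (F p.1 p.2)) ∂(ω.prod ρ))
            - conj l * (∫ p, g (F p.1 p.2) * conj (g p.1) ∂(ω.prod ρ))
            - l * (∫ p, g p.1 * conj (g (F p.1 p.2)) ∂(ω.prod ρ))
            + ((‖l‖ ^ 2 : ℝ) : ℂ) * (∫ p, g p.1 * conj (g p.1) ∂(ω.prod ρ)) := by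
          have hJ1 : Integrable
              (fun p : Ω × Ωs => conj l * (g (F p.1 p.2) * conj (g p.1))) (ω.prod ρ) :=
            hI1.const_mul _
          have hJ2 : Integrable
              (fun p : Ω × Ωs => l * (g p.1 * conj (g (F p.1 p.2)))) (ω.prod ρ) :=
            hI2.const_mul _
          have hJ3 : Integrable
              (fun p : Ω × Ωs => ((‖l‖ ^ 2 : ℝ) : ℂ) * (g p.1 * conj (g p.1))) (ω.prod ρ) :=
            hI3.const_mul _
          have hK1 : Integrable (fun p : Ω × Ωs => g (F p.1 p.2) * conj (g (F p.1 p.2))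
              - conj l * (g (F p.1 p.2) * conj (g p.1))) (ω.prod ρ) := hI0.sub hJ1
          have hK2 : Integrable (fun p : Ω × Ωs => g (F p.1 p.2) * conj (g (F p.1 p.2))
              - conj l * (g (F p.1 p.2) * conj (g p.1))
              - l * (g p.1 * conj (g (F p.1 p.2)))) (ω.prod ρ) := hK1.sub hJ2
          rw [integral_add hK2 hJ3, integral_sub hK1 hJ2, integral_sub hI0 hJ1,
            integral_const_mul, integral_const_mul, integral_const_mul]
      _ = _ := by rw [hE1, hE2, hE3]; ring
  -- expand the left-hand side
  have hterm : ∀ i j : Fin N, conj (c i)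
        * ((L - l • Aᴴ - conj l • A + ((‖l‖ ^ 2 : ℝ) : ℂ) • G) i j) * c j
      = conj (c i) * L i j * c j - l * (conj (c i) * Aᴴ i j * c j)
        - conj l * (conj (c i) * A i j * c j)
        + ((‖l‖ ^ 2 : ℝ) : ℂ) * (conj (c i) * G i j * c j) := by
    intro i j
    simp only [Matrix.sub_apply, Matrix.add_apply, Matrix.smul_apply, smul_eq_mul]
    ring
  calc star c ⬝ᵥ (L - l • Aᴴ - conj l • A + ((‖l‖ ^ 2 : ℝ) : ℂ) • G).mulVec c
      = ∑ i, ∑ j, conj (c i)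
          * ((L - l • Aᴴ - conj l • A + ((‖l‖ ^ 2 : ℝ) : ℂ) • G) i j) * c j := by
        simp [dotProduct, mulVec, Finset.mul_sum, mul_assoc, RCLike.star_def]
    _ = (∑ i, ∑ j, conj (c i) * L i j * c j)
          - l * (∑ i, ∑ j, conj (c i) * Aᴴ i j * c j)
          - conj l * (∑ i, ∑ j, conj (c i) * A i j * c j)
          + ((‖l‖ ^ 2 : ℝ) : ℂ) * (∑ i, ∑ j, conj (c i) * G i j * c j) := by
        simp_rw [hterm, Finset.sum_add_distrib, Finset.sum_sub_distrib, ← Finset.mul_sum]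
    _ = ((∫ p, ‖g (F p.1 p.2) - l * g p.1‖ ^ 2 ∂(ω.prod ρ) : ℝ) : ℂ) := by
        rw [hSL, hSAH, hSA, hSG, hRHS]
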